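/- Let k ≥ 3 and 0 < ε ≤ (k-1)/2 be integers and let G be a vgr(n, k, 5, k(k-1)²/2 − ε)-graph. Then for every vertex u of G and every neighbor u_1 of u, |E(N_2(u) ∩ N(u_1), V(G)∖(N(u) ∪ N_2(u)))| ≤ ε. -/

import Mathlib

open SimpleGraph

/-- The set of vertices at distance exactly 2 from `v` in `G` (denoted `N₂(v)`). -/
def distTwoSet {V : Type*} (G : SimpleGraph V) (v : V) : Set V := {w | G.dist v w = 2}

/-- The set of edges of `G` with one endpoint in `A` and the other endpoint in `B`,
denoted `E(A, B)`. -/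
def edgesBetween {V : Type*} (G : SimpleGraph V) (A B : Set V) : Set (Sym2 V) :=
  {e | e ∈ G.edgeSet ∧ ∃ a ∈ A, ∃ b ∈ B, e = s(a, b)}

/-- Twice the number of cycles of length `g` through the vertex `v`: we count the closed
walks based at `v` that are cycles of length `g`; every (undirected) cycle of length `g`
containing `v` corresponds to exactly two such walks (its two orientations). -/
noncomputable def doubleCycleCountAt {V : Type*} (G : SimpleGraph V) (g : ℕ) (v : V) : ℕ :=
  {p : G.Walk v v | p.IsCycle ∧ p.length = g}.ncard

/-- `G` is a `vgr(n, k, g, lam)`-graph: a `k`-regular graph of girth `g` on `n` vertices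
in which every vertex lies on exactly `lam` cycles of length `g` (equivalently, the number
of closed cycle-walks of length `g` based at each vertex is `2 * lam`). -/
def IsVGR {V : Type*} [Fintype V] (G : SimpleGraph V) [DecidableRel G.Adj]
    (n k g lam : ℕ) : Prop :=
  Fintype.card V = n ∧ (∀ v : V, G.degree v = k) ∧ G.girth = (g : ℕ∞) ∧
    ∀ v : V, doubleCycleCountAt G g v = 2 * lam


lemma cycle_len_ge {V : Type*} {G : SimpleGraph V} (hg : (G.girth : ℕ∞) = 5) :
    ∀ a (w : G.Walk a a), w.IsCycle → 5 ≤ w.length := by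
  have h1 : G.girth = 5 := by exact_mod_cast hg
  have h2 : G.egirth = (5 : ℕ∞) := by
    have hne : G.egirth ≠ ⊤ := by
      intro h; rw [girth, h] at h1; simp at h1
    rw [← ENat.coe_toNat hne]; rw [girth] at h1; rw [h1]; rfl
  intro a w hw
  have := le_egirth.mp h2.ge a w hw
  exact_mod_cast this

lemma no_four_cycle {V : Type*} {G : SimpleGraph V} (hg : (G.girth : ℕ∞) = 5)
    {a b c d : V} (hab : a ≠ b) (hcd : c ≠ d)
    (h1 : G.Adj a c) (h2 : G.Adj c b) (h3 : G.Adj b d) (h4 : G.Adj d a) : False := by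
  have n1 := h1.ne; have n2 := h2.ne; have n3 := h3.ne; have n4 := h4.ne
  have hcyc : (Walk.cons h1 (Walk.cons h2 (Walk.cons h3 (Walk.cons h4 .nil)))).IsCycle := by
    simp [Walk.isCycle_def, Walk.isTrail_def, Sym2.eq_iff]
    tauto
  have := cycle_len_ge hg a _ hcyc
  simp [Walk.length] at this

/-- In a graph of girth 5, two distinct vertices have at most one common neighbor. -/
lemma unique_common {V : Type*} {G : SimpleGraph V} (hg : (G.girth : ℕ∞) = 5)
    {a b c d : V} (hab : a ≠ b)
    (h1 : G.Adj a c) (h2 : G.Adj c b) (h3 : G.Adj a d) (h4 : G.Adj d b) : c = d := by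
  by_contra hcd
  exact no_four_cycle hg hab hcd h1 h2 h4.symm h3.symm

/-- In a graph of girth 5, no triangles. -/
lemma no_triangle {V : Type*} {G : SimpleGraph V} (hg : (G.girth : ℕ∞) = 5)
    {a b c : V} (h1 : G.Adj a b) (h2 : G.Adj b c) (h3 : G.Adj c a) : False := by
  have hcyc : (Walk.cons h1 (Walk.cons h2 (Walk.cons h3 .nil))).IsCycle := by
    have n1 := h1.ne; have n2 := h2.ne; have n3 := h3.ne
    simp [Walk.isCycle_def, Walk.isTrail_def, Sym2.eq_iff]
    tauto
  have := cycle_len_ge hg a _ hcyc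
  simp [Walk.length] at this

lemma walk5_decomp {V : Type*} {G : SimpleGraph V} {x : V} (p : G.Walk x x) (hl : p.length = 5) :
    ∃ (a b c d : V) (h1 : G.Adj x a) (h2 : G.Adj a b) (h3 : G.Adj b c) (h4 : G.Adj c d)
      (h5 : G.Adj d x),
      p = Walk.cons h1 (Walk.cons h2 (Walk.cons h3 (Walk.cons h4 (Walk.cons h5 Walk.nil)))) := by
  cases p with
  | nil => simp at hl
  | cons h1 p =>
  cases p with
  | nil => simp at hl
  | cons h2 p =>
  cases p with
  | nil => simp at hl
  | cons h3 p =>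
  cases p with
  | nil => simp at hl
  | cons h4 p =>
  cases p with
  | nil => simp at hl
  | cons h5 p =>
  cases p with
  | nil => exact ⟨_, _, _, _, h1, h2, h3, h4, h5, rfl⟩
  | cons h6 p => simp [Walk.length_cons] at hl

lemma cycle5_facts {V : Type*} {G : SimpleGraph V} {x a b c d : V}
    (h1 : G.Adj x a) (h2 : G.Adj a b) (h3 : G.Adj b c) (h4 : G.Adj c d) (h5 : G.Adj d x)
    (hcyc : (Walk.cons h1 (Walk.cons h2 (Walk.cons h3 (Walk.cons h4
      (Walk.cons h5 Walk.nil))))).IsCycle) :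
    a ≠ b ∧ a ≠ c ∧ a ≠ d ∧ a ≠ x ∧ b ≠ c ∧ b ≠ d ∧ b ≠ x ∧ c ≠ d ∧ c ≠ x ∧ d ≠ x := by
  have := hcyc.2
  simp [Walk.support_cons] at this
  tauto


lemma not_adj_of_dist_two {V : Type*} {G : SimpleGraph V} {u x : V} (h : G.dist u x = 2) :
    ¬ G.Adj u x := by
  intro ha
  have := SimpleGraph.dist_le ha.toWalk
  simp at this
  omega

lemma ne_of_dist_two {V : Type*} {G : SimpleGraph V} {u x : V} (h : G.dist u x = 2) : x ≠ u := by
  rintro rfl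
  rw [SimpleGraph.dist_self] at h
  omega

/-- If `x ∈ N₂(u)`, `y ~ x`, `y ∉ N(u)`, `y ∉ N₂(u)`, then `u` and `y` have no common
neighbor. -/
lemma no_common_nbr {V : Type*} {G : SimpleGraph V} {u x y c : V} (hx : G.dist u x = 2)
    (hxy : G.Adj x y) (hyadj : ¬ G.Adj u y) (hy2 : G.dist u y ≠ 2)
    (h1 : G.Adj u c) (h2 : G.Adj c y) : False := by
  have hyu : y ≠ u := by
    rintro rfl
    exact not_adj_of_dist_two hx hxy.symm
  have hd : G.dist u y ≤ 2 := by
    simpa using SimpleGraph.dist_le (Walk.cons h1 (Walk.cons h2 Walk.nil))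
  have hr : G.Reachable u y := ⟨Walk.cons h1 (Walk.cons h2 Walk.nil)⟩
  have hd0 : G.dist u y ≠ 0 := fun h0 => hyu (hr.dist_eq_zero_iff.mp h0).symm
  have hd1 : G.dist u y ≠ 1 := fun h1' => hyadj (SimpleGraph.dist_eq_one_iff_adj.mp h1')
  omega

lemma card_proj_bound {α β : Type*} [DecidableEq α] [DecidableEq β]
    (T : Finset (α × β)) (A : Finset α) (n : ℕ)
    (h1 : ∀ t ∈ T, t.1 ∈ A)
    (h2 : ∀ a ∈ A, (T.filter fun t => t.1 = a).card ≤ n) : T.card ≤ A.card * n := by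
  have hsub : T ⊆ A.biUnion (fun a => T.filter fun t => t.1 = a) := by
    intro t ht
    rw [Finset.mem_biUnion]
    exact ⟨t.1, h1 t ht, Finset.mem_filter.mpr ⟨ht, rfl⟩⟩
  calc T.card ≤ _ := Finset.card_le_card hsub
    _ ≤ A.card * n := Finset.card_biUnion_le_card_mul _ _ _ h2

lemma tset_card {V : Type*} [Fintype V] [DecidableEq V] (G : SimpleGraph V)
    [DecidableRel G.Adj] {k : ℕ} (hreg : ∀ v, G.degree v = k) (u u₁ : V) :
    ({t : V × V × V | G.Adj u₁ t.1 ∧ G.Adj u₁ t.2.1 ∧ t.1 ≠ t.2.1 ∧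
      G.Adj (if t.1 = u then t.2.1 else t.1) t.2.2 ∧ t.2.2 ≠ u₁}).ncard
      ≤ k * ((k - 1) * (k - 1)) := by
  set T : Set (V × V × V) := {t : V × V × V | G.Adj u₁ t.1 ∧ G.Adj u₁ t.2.1 ∧ t.1 ≠ t.2.1 ∧
      G.Adj (if t.1 = u then t.2.1 else t.1) t.2.2 ∧ t.2.2 ≠ u₁} with hT
  have hfin : T.Finite := Set.toFinite _
  rw [Set.ncard_eq_toFinset_card _ hfin]
  have hNS : (G.neighborFinset u₁).card = k := by
    rw [card_neighborFinset_eq_degree, hreg]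
  have hmemT : ∀ t ∈ hfin.toFinset, G.Adj u₁ t.1 ∧ G.Adj u₁ t.2.1 ∧ t.1 ≠ t.2.1 ∧
      G.Adj (if t.1 = u then t.2.1 else t.1) t.2.2 ∧ t.2.2 ≠ u₁ := by
    intro t ht
    rwa [Set.Finite.mem_toFinset] at ht
  refine le_trans (card_proj_bound _ (G.neighborFinset u₁) ((k-1)*(k-1)) ?_ ?_) (by rw [hNS])
  · intro t ht
    rw [mem_neighborFinset]
    exact (hmemT t ht).1
  · intro a ha
    set Fa := hfin.toFinset.filter (fun t => t.1 = a) with hFa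
    have himg : Fa.card = (Fa.image Prod.snd).card := by
      rw [Finset.card_image_of_injOn]
      intro t ht t' ht' h
      have h1 : t.1 = a := (Finset.mem_filter.mp ht).2
      have h2 : t'.1 = a := (Finset.mem_filter.mp ht').2
      exact Prod.ext (h1.trans h2.symm) h
    rw [himg]
    refine le_trans (card_proj_bound _ ((G.neighborFinset u₁).erase a) (k-1) ?_ ?_)
      (by rw [Finset.card_erase_of_mem ha, hNS])
    · rintro ⟨c, m⟩ hcm
      obtain ⟨t, ht, heq⟩ := Finset.mem_image.mp hcm
      have ht1 : t.1 = a := (Finset.mem_filter.mp ht).2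
      have hTt := hmemT t (Finset.mem_filter.mp ht).1
      rw [Finset.mem_erase, mem_neighborFinset]
      have hc : t.2.1 = c := by rw [heq]
      constructor
      · show c ≠ a
        rw [← hc, ← ht1]
        exact hTt.2.2.1.symm
      · show G.Adj u₁ c
        rw [← hc]
        exact hTt.2.1
    · intro c hc
      have hwadj : G.Adj u₁ (if a = u then c else a) := by
        split
        · exact (mem_neighborFinset ..).mp (Finset.mem_erase.mp hc).2
        · exact (mem_neighborFinset ..).mp ha
      calc ((Fa.image Prod.snd).filter fun t => t.1 = c).card
          ≤ ((G.neighborFinset (if a = u then c else a)).erase u₁).card := by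
            apply Finset.card_le_card_of_injOn Prod.snd
            · rintro ⟨c', m⟩ hcm
              rw [Finset.mem_coe, Finset.mem_filter] at hcm
              obtain ⟨hcm, hc'⟩ := hcm
              obtain ⟨t, ht, heq⟩ := Finset.mem_image.mp hcm
              have ht1 : t.1 = a := (Finset.mem_filter.mp ht).2
              have hTt := hmemT t (Finset.mem_filter.mp ht).1
              have hc'2 : c' = c := hc'
              have hadj := hTt.2.2.2.1
              have hne := hTt.2.2.2.2
              rw [ht1, heq] at hadj
              rw [heq] at hne
              dsimp only at hadj hne
              rw [hc'2] at hadj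
              show m ∈ _
              rw [Finset.mem_coe, Finset.mem_erase, mem_neighborFinset]
              exact ⟨hne, hadj⟩
            · rintro ⟨c1, m1⟩ h1 ⟨c2, m2⟩ h2 h
              simp only at h
              rw [Finset.mem_coe, Finset.mem_filter] at h1 h2
              simp only at h1 h2
              exact Prod.ext (h1.2.trans h2.2.symm) h
        _ = k - 1 := by
            rw [Finset.card_erase_of_mem, card_neighborFinset_eq_degree, hreg]
            rw [mem_neighborFinset]
            exact hwadj.symm

lemma main_aux {V : Type*} [Fintype V] [DecidableEq V] (G : SimpleGraph V)
    [DecidableRel G.Adj] (k ε : ℕ) (hk : 3 ≤ k) (hεk : 2 * ε ≤ k - 1)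
    (hgirth : (G.girth : ℕ∞) = ((5 : ℕ) : ℕ∞)) (hreg : ∀ v, G.degree v = k)
    (hcyc : ∀ v : V, doubleCycleCountAt G 5 v = 2 * (k * (k - 1) ^ 2 / 2 - ε))
    (u u₁ : V) (hu : G.Adj u u₁) :
    (edgesBetween G (distTwoSet G u ∩ G.neighborSet u₁)
        ((G.neighborSet u ∪ distTwoSet G u)ᶜ)).ncard ≤ ε := by
  set P : Set (V × V) := {q | (G.dist u q.1 = 2 ∧ G.Adj u₁ q.1) ∧
      (¬ G.Adj u q.2 ∧ G.dist u q.2 ≠ 2) ∧ G.Adj q.1 q.2} with hP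
  have himg : (fun q : V × V => s(q.1, q.2)) '' P
      = edgesBetween G (distTwoSet G u ∩ G.neighborSet u₁)
        ((G.neighborSet u ∪ distTwoSet G u)ᶜ) := by
    ext e
    constructor
    · rintro ⟨⟨x, y⟩, hq, rfl⟩
      obtain ⟨⟨hx2, hxadj⟩, ⟨hy1, hy2⟩, hxy⟩ := hq
      refine ⟨G.mem_edgeSet.mpr hxy, x, ⟨hx2, hxadj⟩, y, ?_, rfl⟩
      rintro (h | h)
      · exact hy1 h
      · exact hy2 h
    · rintro ⟨he, x, hx, y, hy, rfl⟩
      exact ⟨(x, y), ⟨⟨hx.1, hx.2⟩, ⟨fun h => hy (Or.inl h), fun h => hy (Or.inr h)⟩,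
        G.mem_edgeSet.mp he⟩, rfl⟩
  have hinjP : Set.InjOn (fun q : V × V => s(q.1, q.2)) P := by
    rintro ⟨x, y⟩ hq ⟨x', y'⟩ hq' h
    simp only [Sym2.eq_iff] at h
    rcases h with ⟨rfl, rfl⟩ | ⟨rfl, rfl⟩
    · rfl
    · exact absurd hq.1.1 hq'.2.1.2
  rw [← himg, Set.ncard_image_of_injOn hinjP]
  set T : Set (V × V × V) := {t : V × V × V | G.Adj u₁ t.1 ∧ G.Adj u₁ t.2.1 ∧ t.1 ≠ t.2.1 ∧
      G.Adj (if t.1 = u then t.2.1 else t.1) t.2.2 ∧ t.2.2 ≠ u₁} with hT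
  set B1 : Set (V × V × V) := (fun q : V × V => (q.1, u, q.2)) '' P with hB1
  set B2 : Set (V × V × V) := (fun q : V × V => (u, q.1, q.2)) '' P with hB2
  set S : Set (G.Walk u₁ u₁) := {p | p.IsCycle ∧ p.length = 5} with hS
  have hScard : S.ncard = 2 * (k * (k - 1) ^ 2 / 2 - ε) := by
    rw [hS]; exact hcyc u₁
  have hPne : ∀ q ∈ P, q.1 ≠ u ∧ q.2 ≠ u₁ := by
    rintro ⟨x, y⟩ hq
    refine ⟨ne_of_dist_two hq.1.1, ?_⟩
    rintro rfl
    exact hq.2.1.1 hu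
  have hB1T : B1 ⊆ T := by
    rintro _ ⟨⟨x, y⟩, hq, rfl⟩
    obtain ⟨hxu, hyu₁⟩ := hPne _ hq
    refine ⟨hq.1.2, hu.symm, hxu, ?_, hyu₁⟩
    show G.Adj (if x = u then u else x) y
    rw [if_neg hxu]
    exact hq.2.2
  have hB2T : B2 ⊆ T := by
    rintro _ ⟨⟨x, y⟩, hq, rfl⟩
    obtain ⟨hxu, hyu₁⟩ := hPne _ hq
    refine ⟨hu.symm, hq.1.2, fun h => hxu h.symm, ?_, hyu₁⟩
    show G.Adj (if u = u then x else u) y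
    rw [if_pos rfl]
    exact hq.2.2
  have hdisj : Disjoint B1 B2 := by
    rw [Set.disjoint_left]
    rintro _ ⟨⟨x, y⟩, hq, rfl⟩ ⟨⟨x', y'⟩, hq', heq⟩
    have h1 : u = x := congrArg Prod.fst heq
    exact (hPne _ hq).1 h1.symm
  have hB1card : B1.ncard = P.ncard := by
    apply Set.ncard_image_of_injOn
    rintro ⟨x, y⟩ _ ⟨x', y'⟩ _ h
    simp only [Prod.mk.injEq] at h
    exact Prod.ext h.1 h.2.2
  have hB2card : B2.ncard = P.ncard := by
    apply Set.ncard_image_of_injOn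
    rintro ⟨x, y⟩ _ ⟨x', y'⟩ _ h
    simp only [Prod.mk.injEq] at h
    exact Prod.ext h.2.1 h.2.2
  set Φ : G.Walk u₁ u₁ → V × V × V := fun p =>
    (p.getVert 1, p.getVert 4, if p.getVert 1 = u then p.getVert 3 else p.getVert 2) with hΦ
  have hmaps : ∀ p ∈ S, Φ p ∈ T \ (B1 ∪ B2) := by
    intro p hp
    obtain ⟨hpc, hpl⟩ := hp
    obtain ⟨a, b, c, d, h1, h2, h3, h4, h5, hpe⟩ := walk5_decomp p hpl
    obtain ⟨hab, hac, had, hax, hbc, hbd, hbx, hcd, hcx, hdx⟩ :=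
      cycle5_facts h1 h2 h3 h4 h5 (hpe ▸ hpc)
    have hΦp : Φ p = (a, d, if a = u then c else b) := by subst hpe; rfl
    rw [hΦp]
    constructor
    · refine ⟨h1, h5.symm, had, ?_, ?_⟩
      · show G.Adj (if a = u then d else a) (if a = u then c else b)
        by_cases hau : a = u
        · simpa [hau] using h4.symm
        · simpa [hau] using h2
      · show (if a = u then c else b) ≠ u₁
        by_cases hau : a = u
        · simpa [hau] using hcx
        · simpa [hau] using hbx
    · rintro (⟨⟨x, y⟩, hq, heq⟩ | ⟨⟨x, y⟩, hq, heq⟩)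
      · -- B1 case : (x, u, y) = (a, d, m)
        have hx : x = a := congrArg Prod.fst heq
        have hud : u = d := (congrArg (fun t => t.2.1) heq : u = d)
        have hau : a ≠ u := by
          rw [← hx]
          exact (hPne _ hq).1
        have hym : y = b := by
          have := (congrArg (fun t => t.2.2) heq : y = if a = u then c else b)
          rwa [if_neg hau] at this
        rw [hx, hym] at hq
        have huc : G.Adj u c := by rw [hud]; exact h4.symm
        exact no_common_nbr hq.1.1 h2 hq.2.1.1 hq.2.1.2 huc h3.symm
      · -- B2 case : (u, x, y) = (a, d, m)
        have hau : u = a := congrArg Prod.fst heq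
        have hx : x = d := (congrArg (fun t => t.2.1) heq : x = d)
        have hym : y = c := by
          have := (congrArg (fun t => t.2.2) heq : y = if a = u then c else b)
          rwa [if_pos hau.symm] at this
        rw [hx, hym] at hq
        have hub : G.Adj u b := by rw [hau]; exact h2
        exact no_common_nbr hq.1.1 h4.symm hq.2.1.1 hq.2.1.2 hub h3
  have hinj : Set.InjOn Φ S := by
    intro p hp p' hp' hΦe
    obtain ⟨hpc, hpl⟩ := hp
    obtain ⟨hpc', hpl'⟩ := hp'
    obtain ⟨a, b, c, d, h1, h2, h3, h4, h5, hpe⟩ := walk5_decomp p hpl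
    obtain ⟨a', b', c', d', h1', h2', h3', h4', h5', hpe'⟩ := walk5_decomp p' hpl'
    have f := cycle5_facts h1 h2 h3 h4 h5 (hpe ▸ hpc)
    have f' := cycle5_facts h1' h2' h3' h4' h5' (hpe' ▸ hpc')
    have hΦp : Φ p = (a, d, if a = u then c else b) := by subst hpe; rfl
    have hΦp' : Φ p' = (a', d', if a' = u then c' else b') := by subst hpe'; rfl
    rw [hΦp, hΦp'] at hΦe
    have ha : a = a' := congrArg Prod.fst hΦe
    have hd : d = d' := (congrArg (fun t => t.2.1) hΦe : d = d')
    have hm := (congrArg (fun t => t.2.2) hΦe :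
      (if a = u then c else b) = (if a' = u then c' else b'))
    subst ha
    subst hd
    by_cases hau : a = u
    · rw [if_pos hau, if_pos hau] at hm
      subst hm
      have hb : b = b' := unique_common hgirth f.2.1 h2 h3 h2' h3'
      subst hb
      rw [hpe, hpe']
    · rw [if_neg hau, if_neg hau] at hm
      subst hm
      have hc : c = c' := unique_common hgirth f.2.2.2.2.2.1 h3 h4 h3' h4'
      subst hc
      rw [hpe, hpe']
  have hsub : B1 ∪ B2 ⊆ T := Set.union_subset hB1T hB2T
  have h6 : S.ncard ≤ (T \ (B1 ∪ B2)).ncard :=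
    Set.ncard_le_ncard_of_injOn Φ hmaps hinj (Set.toFinite _)
  have h7 : (T \ (B1 ∪ B2)).ncard = T.ncard - (B1 ∪ B2).ncard :=
    Set.ncard_diff hsub (Set.toFinite _)
  have h8 : (B1 ∪ B2).ncard = P.ncard + P.ncard := by
    rw [Set.ncard_union_eq hdisj (Set.toFinite _) (Set.toFinite _), hB1card, hB2card]
  have h9 : (B1 ∪ B2).ncard ≤ T.ncard := Set.ncard_le_ncard hsub (Set.toFinite _)
  have hTcard : T.ncard ≤ k * ((k - 1) * (k - 1)) := by
    rw [hT]; exact tset_card G hreg u u₁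
  have hpow : (k - 1) ^ 2 = (k - 1) * (k - 1) := pow_two _
  have hTcard' : T.ncard ≤ k * (k - 1) ^ 2 := by rw [hpow]; exact hTcard
  have hdvd : 2 ∣ k * (k - 1) ^ 2 := by
    rcases Nat.even_or_odd k with he | ho
    · exact Dvd.dvd.mul_right he.two_dvd _
    · have h2e : Even (k - 1) := Nat.Odd.sub_odd ho odd_one
      exact Dvd.dvd.mul_left (dvd_pow h2e.two_dvd two_ne_zero) k
  have hE : k * (k - 1) ^ 2 / 2 * 2 = k * (k - 1) ^ 2 := Nat.div_mul_cancel hdvd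
  have hkE : k - 1 ≤ k * (k - 1) ^ 2 := by
    have h1 : k - 1 ≤ (k - 1) * (k - 1) := Nat.le_mul_of_pos_right _ (by omega)
    have h2 : (k - 1) * (k - 1) ≤ k * ((k - 1) * (k - 1)) :=
      Nat.le_mul_of_pos_left _ (by omega)
    rw [hpow]
    exact le_trans h1 h2
  have key : P.ncard + P.ncard + S.ncard ≤ T.ncard := by omega
  have hgen : ∀ x : ℕ, 2 * (x - ε) = 2 * x - 2 * ε := fun x => by omega
  have hs' : S.ncard = 2 * (k * (k - 1) ^ 2 / 2) - 2 * ε := by rw [hScard, hgen]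
  omega

/-- If `G` is a `vgr(n, k, 5, k(k-1)²/2 − ε)`-graph with `k ≥ 3` and
`0 < ε ≤ (k-1)/2`, then for every vertex `u` and every neighbor `u₁` of `u`,
`|E(N₂(u) ∩ N(u₁), V∖(N(u) ∪ N₂(u)))| ≤ ε`. -/
theorem vgr_outer_edges_through_neighbor {V : Type*} [Fintype V] (G : SimpleGraph V)
    [DecidableRel G.Adj] (k ε n : ℕ) (hk : 3 ≤ k) (hε : 0 < ε) (hεk : 2 * ε ≤ k - 1)
    (hG : IsVGR G n k 5 (k * (k - 1) ^ 2 / 2 - ε)) :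
    ∀ u u₁ : V, G.Adj u u₁ →
      (edgesBetween G (distTwoSet G u ∩ G.neighborSet u₁)
        ((G.neighborSet u ∪ distTwoSet G u)ᶜ)).ncard ≤ ε := by
  classical
  obtain ⟨-, hreg, hgirth, hcyc⟩ := hG
  intro u u₁ hu
  exact main_aux G k ε hk hεk hgirth hreg hcyc u u₁ hu
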